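/- Let S be a finite set, q ≥ 3 an integer, and p a positive integer with p ≥ (q−1)(q−2)/2 + 1. Then every p/q-submodular function f : 2^S → ℝ is (2q−3)-distant submodular. -/
import Mathlib


open scoped symmDiff Classical

/-- A set function `f` on subsets of a finite type is `k`-distant submodular if the
submodular inequality holds for every pair whose symmetric difference has size at least `k`. -/
def DistantSubmodular {α : Type*} [DecidableEq α] (k : ℕ) (f : Finset α → ℝ) : Prop :=
  ∀ X Y : Finset α, k ≤ (X ∆ Y).card → f (X ∪ Y) + f (X ∩ Y) ≤ f X + f Y

/-- A set function `f` is `p/q`-submodular if for every `q` pairwise distinct subsets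
there are at least `p` index pairs `(i, j)` with `i < j` satisfying the submodular
inequality. -/
def PQSubmodular {α : Type*} [DecidableEq α] (p q : ℕ) (f : Finset α → ℝ) : Prop :=
  ∀ T : Fin q → Finset α, Function.Injective T →
    p ≤ (Finset.univ.filter (fun ij : Fin q × Fin q =>
      ij.1 < ij.2 ∧ f (T ij.1 ∪ T ij.2) + f (T ij.1 ∩ T ij.2) ≤ f (T ij.1) + f (T ij.2))).card

lemma ltPairsCard (q : ℕ) :
    (Finset.univ.filter (fun ij : Fin q × Fin q => ij.1 < ij.2)).card * 2 = q * (q - 1) := by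
  have h1 : (Finset.univ.filter (fun ij : Fin q × Fin q => ij.1 < ij.2)).card
      = ∑ j : Fin q, (j : ℕ) := by
    rw [Finset.card_eq_sum_card_fiberwise
      (f := Prod.snd) (t := (Finset.univ : Finset (Fin q))) (fun x _ => Finset.mem_univ _)]
    refine Finset.sum_congr rfl fun j _ => ?_
    have hset : ((Finset.univ.filter (fun ij : Fin q × Fin q => ij.1 < ij.2)).filter
        (fun x => x.snd = j))
        = (Finset.Iio j).map ⟨fun i => (i, j), fun a b hab => (Prod.ext_iff.mp hab).1⟩ := by
      ext z
      simp only [Finset.mem_filter, Finset.mem_univ, true_and, Finset.mem_map,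
        Finset.mem_Iio, Function.Embedding.coeFn_mk, Prod.ext_iff]
      constructor
      · rintro ⟨hlt, hsnd⟩
        exact ⟨z.1, by rwa [hsnd] at hlt, rfl, hsnd.symm⟩
      · rintro ⟨i, hi, h1, h2⟩
        constructor
        · rw [← h1, ← h2]; exact hi
        · exact h2.symm
    rw [hset, Finset.card_map, Fin.card_Iio]
  rw [h1, Fin.sum_univ_eq_sum_range (fun i => i) q]
  exact Finset.sum_range_id_mul_two q

lemma aux_main {α : Type*} [DecidableEq α] (p q : ℕ) (hq : 3 ≤ q)
    (hp : (q - 1) * (q - 2) / 2 + 1 ≤ p)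
    (f : Finset α → ℝ) (hf : PQSubmodular p q f) (X Y : Finset α)
    (ha : q - 1 ≤ (X \ Y).card) (hb : (Y \ X).Nonempty) :
    f (X ∪ Y) + f (X ∩ Y) ≤ f X + f Y := by
  by_contra hcon
  push_neg at hcon
  -- hcon : f X + f Y < f (X ∪ Y) + f (X ∩ Y)
  obtain ⟨y, hy⟩ := hb
  rw [Finset.mem_sdiff] at hy
  obtain ⟨hyY, hyX⟩ := hy
  -- choose the sets A r
  have hch : ∀ r : ℕ, ∃ B : Finset α, r ≤ (X \ Y).card → (B ⊆ X \ Y ∧ B.card = r) := by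
    intro r
    by_cases h : r ≤ (X \ Y).card
    · obtain ⟨B, h1, h2⟩ := Finset.exists_subset_card_eq h
      exact ⟨B, fun _ => ⟨h1, h2⟩⟩
    · exact ⟨∅, fun hr => absurd hr h⟩
  choose A hA using hch
  have hAsub : ∀ r : ℕ, r ≤ q - 2 → A r ⊆ X \ Y := fun r hr => (hA r (by omega)).1
  have hAcard : ∀ r : ℕ, r ≤ q - 2 → (A r).card = r := fun r hr => (hA r (by omega)).2
  -- basic facts about the building blocks
  have hyQ : ∀ r : ℕ, y ∈ Y ∪ A r := fun r => Finset.mem_union_left _ hyY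
  have hyP : ∀ r : ℕ, r ≤ q - 2 → y ∉ X ∩ Y ∪ A r := by
    intro r hr hmem
    rcases Finset.mem_union.mp hmem with h | h
    · exact hyX (Finset.mem_inter.mp h).1
    · exact hyX (Finset.mem_sdiff.mp (hAsub r hr h)).1
  have hdisj1 : ∀ r : ℕ, r ≤ q - 2 → Disjoint (X ∩ Y) (A r) := by
    intro r hr
    rw [Finset.disjoint_left]
    intro x hx hx'
    exact (Finset.mem_sdiff.mp (hAsub r hr hx')).2 (Finset.mem_inter.mp hx).2
  have hdisj2 : ∀ r : ℕ, r ≤ q - 2 → Disjoint Y (A r) := by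
    intro r hr
    rw [Finset.disjoint_left]
    intro x hx hx'
    exact (Finset.mem_sdiff.mp (hAsub r hr hx')).2 hx
  have hPcard : ∀ r : ℕ, r ≤ q - 2 → (X ∩ Y ∪ A r).card = (X ∩ Y).card + r := by
    intro r hr
    rw [Finset.card_union_of_disjoint (hdisj1 r hr), hAcard r hr]
  have hQcard : ∀ r : ℕ, r ≤ q - 2 → (Y ∪ A r).card = Y.card + r := by
    intro r hr
    rw [Finset.card_union_of_disjoint (hdisj2 r hr), hAcard r hr]
  have hXcard : (X ∩ Y).card + (X \ Y).card = X.card := Finset.card_inter_add_card_sdiff X Y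
  -- set identities
  have hs1 : ∀ r : ℕ, r ≤ q - 2 → X ∪ (Y ∪ A r) = X ∪ Y := by
    intro r hr
    ext x
    simp only [Finset.mem_union]
    constructor
    · rintro (h | h | h)
      · exact Or.inl h
      · exact Or.inr h
      · exact Or.inl (Finset.mem_sdiff.mp (hAsub r hr h)).1
    · rintro (h | h)
      · exact Or.inl h
      · exact Or.inr (Or.inl h)
  have hs2 : ∀ r : ℕ, r ≤ q - 2 → X ∩ (Y ∪ A r) = X ∩ Y ∪ A r := by
    intro r hr
    ext x
    simp only [Finset.mem_union, Finset.mem_inter]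
    constructor
    · rintro ⟨hX, hY | hAr⟩
      · exact Or.inl ⟨hX, hY⟩
      · exact Or.inr hAr
    · rintro (⟨hX, hY⟩ | hAr)
      · exact ⟨hX, Or.inl hY⟩
      · exact ⟨(Finset.mem_sdiff.mp (hAsub r hr hAr)).1, Or.inr hAr⟩
  have hs3 : ∀ r : ℕ, (X ∩ Y ∪ A r) ∪ Y = Y ∪ A r := by
    intro r
    ext x
    simp only [Finset.mem_union, Finset.mem_inter]
    constructor
    · rintro ((⟨_, h⟩ | h) | h)
      · exact Or.inl h
      · exact Or.inr h
      · exact Or.inl h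
    · rintro (h | h)
      · exact Or.inr h
      · exact Or.inl (Or.inr h)
  have hs4 : ∀ r : ℕ, r ≤ q - 2 → (X ∩ Y ∪ A r) ∩ Y = X ∩ Y := by
    intro r hr
    ext x
    simp only [Finset.mem_union, Finset.mem_inter]
    constructor
    · rintro ⟨h | h, hY⟩
      · exact h
      · exact absurd hY (Finset.mem_sdiff.mp (hAsub r hr h)).2
    · rintro ⟨hX, hY⟩
      exact ⟨Or.inl ⟨hX, hY⟩, hY⟩
  -- the decisive condition
  set c : ℕ → Prop := fun r => f X + f (Y ∪ A r) < f (X ∪ Y) + f (X ∩ Y ∪ A r) with hcdef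
  -- the family
  set T : Fin q → Finset α := fun i =>
    if i.val = 0 then X else if i.val = q - 1 then Y
    else if c i.val then Y ∪ A i.val else X ∩ Y ∪ A i.val with hTdef
  have hT0 : ∀ i : Fin q, i.val = 0 → T i = X := by
    intro i h; simp [hTdef, h]
  have hTlast : ∀ i : Fin q, i.val = q - 1 → T i = Y := by
    intro i h; simp [hTdef, h, show ¬(q - 1 = 0) by omega]
  have hTmidQ : ∀ i : Fin q, i.val ≠ 0 → i.val ≠ q - 1 → c i.val → T i = Y ∪ A i.val := by
    intro i h1 h2 h3; simp [hTdef, h1, h2, h3]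
  have hTmidP : ∀ i : Fin q, i.val ≠ 0 → i.val ≠ q - 1 → ¬c i.val →
      T i = X ∩ Y ∪ A i.val := by
    intro i h1 h2 h3; simp [hTdef, h1, h2, h3]
  have hmid : ∀ i : Fin q, i.val ≠ 0 → i.val ≠ q - 1 → 1 ≤ i.val ∧ i.val ≤ q - 2 := by
    intro i h1 h2
    have := i.isLt
    omega
  -- injectivity of the family
  have hinj : Function.Injective T := by
    intro i j hij
    apply Fin.eq_of_val_eq
    by_cases hi0 : i.val = 0
    · rw [hT0 i hi0] at hij
      by_cases hj0 : j.val = 0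
      · omega
      · exfalso
        by_cases hj1 : j.val = q - 1
        · rw [hTlast j hj1] at hij
          exact hyX (hij ▸ hyY)
        · obtain ⟨hj2, hj3⟩ := hmid j hj0 hj1
          by_cases hcj : c j.val
          · rw [hTmidQ j hj0 hj1 hcj] at hij
            apply hyX; rw [hij]; exact hyQ _
          · rw [hTmidP j hj0 hj1 hcj] at hij
            have := congrArg Finset.card hij
            rw [hPcard j.val hj3] at this
            omega
    · by_cases hi1 : i.val = q - 1
      · rw [hTlast i hi1] at hij
        by_cases hj0 : j.val = 0
        · exfalso; rw [hT0 j hj0] at hij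
          exact hyX (hij ▸ hyY)
        · by_cases hj1 : j.val = q - 1
          · omega
          · exfalso
            obtain ⟨hj2, hj3⟩ := hmid j hj0 hj1
            by_cases hcj : c j.val
            · rw [hTmidQ j hj0 hj1 hcj] at hij
              have := congrArg Finset.card hij
              rw [hQcard j.val hj3] at this
              omega
            · rw [hTmidP j hj0 hj1 hcj] at hij
              apply hyP j.val hj3; rw [← hij]; exact hyY
      · obtain ⟨hi2, hi3⟩ := hmid i hi0 hi1
        by_cases hci : c i.val
        · rw [hTmidQ i hi0 hi1 hci] at hij
          by_cases hj0 : j.val = 0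
          · exfalso; rw [hT0 j hj0] at hij
            apply hyX; rw [← hij]; exact hyQ _
          · by_cases hj1 : j.val = q - 1
            · exfalso; rw [hTlast j hj1] at hij
              have := congrArg Finset.card hij
              rw [hQcard i.val hi3] at this
              omega
            · obtain ⟨hj2, hj3⟩ := hmid j hj0 hj1
              by_cases hcj : c j.val
              · rw [hTmidQ j hj0 hj1 hcj] at hij
                have := congrArg Finset.card hij
                rw [hQcard i.val hi3, hQcard j.val hj3] at this
                omega
              · exfalso; rw [hTmidP j hj0 hj1 hcj] at hij
                apply hyP j.val hj3; rw [← hij]; exact hyQ _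
        · rw [hTmidP i hi0 hi1 hci] at hij
          by_cases hj0 : j.val = 0
          · exfalso; rw [hT0 j hj0] at hij
            have := congrArg Finset.card hij
            rw [hPcard i.val hi3] at this
            omega
          · by_cases hj1 : j.val = q - 1
            · exfalso; rw [hTlast j hj1] at hij
              apply hyP i.val hi3; rw [hij]; exact hyY
            · obtain ⟨hj2, hj3⟩ := hmid j hj0 hj1
              by_cases hcj : c j.val
              · exfalso; rw [hTmidQ j hj0 hj1 hcj] at hij
                apply hyP i.val hi3; rw [hij]; exact hyQ _
              · rw [hTmidP j hj0 hj1 hcj] at hij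
                have := congrArg Finset.card hij
                rw [hPcard i.val hi3, hPcard j.val hj3] at this
                omega
  -- the good set
  have hpG := hf T hinj
  set G : Finset (Fin q × Fin q) := Finset.univ.filter (fun ij : Fin q × Fin q =>
      ij.1 < ij.2 ∧ f (T ij.1 ∪ T ij.2) + f (T ij.1 ∩ T ij.2) ≤ f (T ij.1) + f (T ij.2))
    with hGdef
  -- the bad pairs
  have hq1 : (0 : ℕ) < q := by omega
  have hqlast : q - 1 < q := by omega
  set φ : Fin (q - 1) → Fin q × Fin q := fun r =>
    if r.val = 0 then (⟨0, hq1⟩, ⟨q - 1, hqlast⟩)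
    else if c r.val then (⟨0, hq1⟩, ⟨r.val, by omega⟩)
    else (⟨r.val, by omega⟩, ⟨q - 1, hqlast⟩) with hφdef
  have hφrange : ∀ r : Fin (q - 1), r.val ≠ 0 → 1 ≤ r.val ∧ r.val ≤ q - 2 := by
    intro r hr
    have := r.isLt
    omega
  have hφinj : Function.Injective φ := by
    intro r s h
    apply Fin.eq_of_val_eq
    by_cases hr0 : r.val = 0 <;> by_cases hs0 : s.val = 0
    · omega
    · exfalso
      simp only [hφdef, hr0, if_pos, if_neg hs0] at h
      by_cases hcs : c s.val
      · rw [if_pos hcs] at h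
        have h2 := congrArg (fun z => (Prod.snd z).val) h
        simp only at h2
        have := (hφrange s hs0).2
        omega
      · rw [if_neg hcs] at h
        have h2 := congrArg (fun z => (Prod.fst z).val) h
        simp only at h2
        omega
    · exfalso
      simp only [hφdef, hs0, if_pos, if_neg hr0] at h
      by_cases hcr : c r.val
      · rw [if_pos hcr] at h
        have h2 := congrArg (fun z => (Prod.snd z).val) h
        simp only at h2
        have := (hφrange r hr0).2
        omega
      · rw [if_neg hcr] at h
        have h2 := congrArg (fun z => (Prod.fst z).val) h
        simp only at h2
        omega
    · simp only [hφdef, if_neg hr0, if_neg hs0] at h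
      by_cases hcr : c r.val <;> by_cases hcs : c s.val
      · rw [if_pos hcr, if_pos hcs] at h
        have h2 := congrArg (fun z => (Prod.snd z).val) h
        simp only at h2
        omega
      · exfalso
        rw [if_pos hcr, if_neg hcs] at h
        have h2 := congrArg (fun z => (Prod.fst z).val) h
        simp only at h2
        omega
      · exfalso
        rw [if_neg hcr, if_pos hcs] at h
        have h2 := congrArg (fun z => (Prod.fst z).val) h
        simp only at h2
        omega
      · rw [if_neg hcr, if_neg hcs] at h
        have h2 := congrArg (fun z => (Prod.fst z).val) h
        simp only at h2
        omega
  set B : Finset (Fin q × Fin q) := Finset.univ.image φ with hBdef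
  have hBcard : B.card = q - 1 := by
    rw [hBdef, Finset.card_image_of_injective _ hφinj, Finset.card_univ, Fintype.card_fin]
  -- every φ r is a strictly increasing pair not in G
  have hφprop : ∀ r : Fin (q - 1), (φ r).1 < (φ r).2 ∧ φ r ∉ G := by
    intro r
    have hrlt := r.isLt
    by_cases hr0 : r.val = 0
    · have hφr : φ r = (⟨0, hq1⟩, ⟨q - 1, hqlast⟩) := by simp [hφdef, hr0]
      rw [hφr]
      constructor
      · exact Fin.mk_lt_mk.mpr (by omega)
      · intro hmem
        rw [hGdef, Finset.mem_filter] at hmem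
        obtain ⟨-, -, hineq⟩ := hmem
        rw [hT0 ⟨0, hq1⟩ rfl, hTlast ⟨q - 1, hqlast⟩ rfl] at hineq
        linarith
    · obtain ⟨hr1, hr2⟩ := hφrange r hr0
      have hrq : r.val < q := by omega
      have hne0 : (⟨r.val, hrq⟩ : Fin q).val ≠ 0 := hr0
      have hne1 : (⟨r.val, hrq⟩ : Fin q).val ≠ q - 1 := by
        show r.val ≠ q - 1
        omega
      by_cases hcr : c r.val
      · have hφr : φ r = (⟨0, hq1⟩, ⟨r.val, hrq⟩) := by simp [hφdef, hr0, hcr]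
        rw [hφr]
        constructor
        · exact Fin.mk_lt_mk.mpr (by omega)
        · intro hmem
          rw [hGdef, Finset.mem_filter] at hmem
          obtain ⟨-, -, hineq⟩ := hmem
          rw [hT0 ⟨0, hq1⟩ rfl, hTmidQ ⟨r.val, hrq⟩ hne0 hne1 hcr] at hineq
          rw [hs1 r.val hr2, hs2 r.val hr2] at hineq
          have hcr' : f X + f (Y ∪ A r.val) < f (X ∪ Y) + f (X ∩ Y ∪ A r.val) := hcr
          linarith
      · have hφr : φ r = (⟨r.val, hrq⟩, ⟨q - 1, hqlast⟩) := by simp [hφdef, hr0, hcr]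
        rw [hφr]
        constructor
        · exact Fin.mk_lt_mk.mpr (by omega)
        · intro hmem
          rw [hGdef, Finset.mem_filter] at hmem
          obtain ⟨-, -, hineq⟩ := hmem
          rw [hTlast ⟨q - 1, hqlast⟩ rfl, hTmidP ⟨r.val, hrq⟩ hne0 hne1 hcr] at hineq
          rw [hs3 r.val, hs4 r.val hr2] at hineq
          have hcr' : ¬(f X + f (Y ∪ A r.val) < f (X ∪ Y) + f (X ∩ Y ∪ A r.val)) := hcr
          rw [not_lt] at hcr'
          linarith
  -- counting
  set S : Finset (Fin q × Fin q) := Finset.univ.filter (fun ij : Fin q × Fin q => ij.1 < ij.2)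
    with hSdef
  have hGS : G ⊆ S := by
    intro z hz
    rw [hGdef, Finset.mem_filter] at hz
    rw [hSdef, Finset.mem_filter]
    exact ⟨hz.1, hz.2.1⟩
  have hBS : B ⊆ S := by
    intro z hz
    rw [hBdef, Finset.mem_image] at hz
    obtain ⟨r, -, rfl⟩ := hz
    rw [hSdef, Finset.mem_filter]
    exact ⟨Finset.mem_univ _, (hφprop r).1⟩
  have hdisjGB : Disjoint G B := by
    rw [Finset.disjoint_right]
    intro z hz
    rw [hBdef, Finset.mem_image] at hz
    obtain ⟨r, -, rfl⟩ := hz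
    exact (hφprop r).2
  have hcount : G.card + B.card ≤ S.card := by
    rw [← Finset.card_union_of_disjoint hdisjGB]
    exact Finset.card_le_card (Finset.union_subset hGS hBS)
  have hScard : S.card * 2 = q * (q - 1) := ltPairsCard q
  -- arithmetic contradiction
  have hp2 : (q - 1) * (q - 2) + 2 ≤ p * 2 := by
    have h2 : 2 ∣ (q - 1) * (q - 2) := by
      have := Nat.even_mul_succ_self (q - 2)
      rw [show q - 2 + 1 = q - 1 by omega] at this
      rw [mul_comm]
      exact this.two_dvd
    have := Nat.mul_le_mul_right 2 hp
    rwa [add_mul, Nat.div_mul_cancel h2, one_mul] at this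
  have hkey : q * (q - 1) = (q - 1) * (q - 2) + 2 * (q - 1) := by
    obtain ⟨m, rfl⟩ : ∃ m, q = m + 3 := ⟨q - 3, by omega⟩
    rw [show m + 3 - 1 = m + 2 by omega, show m + 3 - 2 = m + 1 by omega]
    ring
  have hfinal : p + (q - 1) ≤ S.card := by
    calc p + (q - 1) ≤ G.card + B.card := by rw [hBcard]; exact Nat.add_le_add_right hpG _
    _ ≤ S.card := hcount
  have h1 : (p + (q - 1)) * 2 ≤ S.card * 2 := Nat.mul_le_mul_right 2 hfinal
  rw [hScard, hkey] at h1
  generalize (q - 1) * (q - 2) = w at hp2 h1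
  omega

theorem stmt_5 {α : Type*} [DecidableEq α] (p q : ℕ) (hq : 3 ≤ q) (hp0 : 1 ≤ p)
    (hp : (q - 1) * (q - 2) / 2 + 1 ≤ p)
    (f : Finset α → ℝ) (hf : PQSubmodular p q f) :
    DistantSubmodular (2 * q - 3) f := by
  intro X Y hXY
  have hcard : (X ∆ Y).card = (X \ Y).card + (Y \ X).card := by
    rw [symmDiff_def, Finset.sup_eq_union,
      Finset.card_union_of_disjoint disjoint_sdiff_sdiff]
  by_cases hb0 : Y \ X = ∅
  · have hsub : Y ⊆ X := by rwa [Finset.sdiff_eq_empty_iff_subset] at hb0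
    rw [Finset.union_eq_left.mpr hsub, Finset.inter_eq_right.mpr hsub]
  · by_cases ha0 : X \ Y = ∅
    · have hsub : X ⊆ Y := by rwa [Finset.sdiff_eq_empty_iff_subset] at ha0
      rw [Finset.union_eq_right.mpr hsub, Finset.inter_eq_left.mpr hsub]
      linarith
    · rw [hcard] at hXY
      rcases le_or_gt (q - 1) ((X \ Y).card) with h | h
      · exact aux_main p q hq hp f hf X Y h (Finset.nonempty_iff_ne_empty.mpr hb0)
      · have h' : q - 1 ≤ (Y \ X).card := by omega
        have := aux_main p q hq hp f hf Y X h' (Finset.nonempty_iff_ne_empty.mpr ha0)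
        rw [Finset.union_comm, Finset.inter_comm] at this
        linarith
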